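/- Let P be a finite set of points in the plane ℝ² in general position (no three points of P lie on a common line) and let t ≥ 3 be an integer. Let ℰ' be the collection of all sets of the form P ∩ h where h is a half-plane and |P ∩ h| = t. Let P' ⊆ P be the set of points of P that are extreme points of the convex hull of P. Suppose N ⊆ P' is a containment-minimal hitting set for ℰ', i.e., N ∩ E ≠ ∅ for every E ∈ ℰ', and no proper subset N'' ⊊ N satisfies N'' ∩ E ≠ ∅ for every E ∈ ℰ'. Then |N ∩ E| ≤ 2 for every E ∈ ℰ'. -/

import Mathlib

open scoped Classical
set_option maxHeartbeats 1000000

private lemma linmap (a : ℝ × ℝ) : IsLinearMap ℝ (fun x : ℝ × ℝ => a.1 * x.1 + a.2 * x.2) := by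
  constructor
  · intro p q; simp [Prod.fst_add, Prod.snd_add]; ring
  · intro c p; simp [Prod.smul_fst, Prod.smul_snd, smul_eq_mul]; ring

private lemma seg_le {a : ℝ × ℝ} {b : ℝ} {x y z : ℝ × ℝ}
    (hx : a.1 * x.1 + a.2 * x.2 ≤ b) (hy : a.1 * y.1 + a.2 * y.2 ≤ b)
    (hz : z ∈ segment ℝ x y) : a.1 * z.1 + a.2 * z.2 ≤ b := by
  obtain ⟨s, t, hs, ht, hst, rfl⟩ := hz
  have h1 := mul_le_mul_of_nonneg_left hx hs
  have h2 := mul_le_mul_of_nonneg_left hy ht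
  have h3 : s * b + t * b = b := by rw [← add_mul, hst, one_mul]
  simp only [Prod.fst_add, Prod.snd_add, Prod.smul_fst, Prod.smul_snd, smul_eq_mul]
  nlinarith

private lemma seg_lt {a : ℝ × ℝ} {b : ℝ} {x y z : ℝ × ℝ}
    (hx : b < a.1 * x.1 + a.2 * x.2) (hy : b < a.1 * y.1 + a.2 * y.2)
    (hz : z ∈ segment ℝ x y) : b < a.1 * z.1 + a.2 * z.2 := by
  obtain ⟨s, t, hs, ht, hst, rfl⟩ := hz
  have h3 : s * b + t * b = b := by rw [← add_mul, hst, one_mul]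
  simp only [Prod.fst_add, Prod.snd_add, Prod.smul_fst, Prod.smul_snd, smul_eq_mul]
  rcases hs.lt_or_eq with hs' | hs'
  · have h1 := mul_le_mul_of_nonneg_left hy.le ht
    nlinarith [mul_lt_mul_of_pos_left hx hs']
  · have ht1 : t = 1 := by linarith
    subst ht1
    have hs0 : s = 0 := by linarith
    subst hs0
    nlinarith

private lemma hull_le {a : ℝ × ℝ} {b : ℝ} {S : Set (ℝ × ℝ)}
    (hS : ∀ y ∈ S, a.1 * y.1 + a.2 * y.2 ≤ b) {x : ℝ × ℝ}
    (hx : x ∈ convexHull ℝ S) : a.1 * x.1 + a.2 * x.2 ≤ b :=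
  convexHull_min hS (convex_halfSpace_le (linmap a) b) hx


private lemma hull_le' {a : ℝ × ℝ} {b : ℝ} {S : Set (ℝ × ℝ)}
    (hS : ∀ y ∈ S, a.1 * y.1 + a.2 * y.2 ≤ b) {x : ℝ × ℝ}
    (hx : x ∈ convexHull ℝ S) : a.1 * x.1 + a.2 * x.2 ≤ b :=
  convexHull_min hS (convex_halfSpace_le ⟨fun p q => by simp [Prod.fst_add, Prod.snd_add]; ring,
    fun c p => by simp [Prod.smul_fst, Prod.smul_snd, smul_eq_mul]; ring⟩ b) hx

private lemma radon4 (a : ℝ × ℝ) (b : ℝ) (A B C q : ℝ × ℝ)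
    (hfA : a.1 * A.1 + a.2 * A.2 ≤ b) (hfB : a.1 * B.1 + a.2 * B.2 ≤ b)
    (hfC : a.1 * C.1 + a.2 * C.2 ≤ b) (hfq : b < a.1 * q.1 + a.2 * q.2)
    (hA : A ∉ convexHull ℝ ({B, C, q} : Set (ℝ × ℝ)))
    (hB : B ∉ convexHull ℝ ({A, C, q} : Set (ℝ × ℝ)))
    (hC : C ∉ convexHull ℝ ({A, B, q} : Set (ℝ × ℝ))) :
    (segment ℝ A q ∩ segment ℝ B C).Nonempty ∨
    (segment ℝ B q ∩ segment ℝ A C).Nonempty ∨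
    (segment ℝ C q ∩ segment ℝ A B).Nonempty := by
  classical
  set f : Fin 4 → ℝ × ℝ := ![A, B, C, q] with hf
  have hdep : ¬ AffineIndependent ℝ f := by
    intro h
    have h4 := h.card_le_finrank_succ
    have h2 : Module.finrank ℝ (vectorSpan ℝ (Set.range f)) ≤ Module.finrank ℝ (ℝ × ℝ) :=
      Submodule.finrank_le _
    simp [Module.finrank_prod] at h4 h2
    omega
  obtain ⟨I, x, hxI, hxIc⟩ := Convex.radon_partition hdep
  have hfv0 : f 0 = A := by simp [hf]
  have hfv1 : f 1 = B := by simp [hf]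
  have hfv2 : f 2 = C := by simp [hf]
  have hfv3 : f 3 = q := by simp [hf]
  by_cases h0 : (0 : Fin 4) ∈ I <;> by_cases h1 : (1 : Fin 4) ∈ I <;>
    by_cases h2 : (2 : Fin 4) ∈ I <;> by_cases h3 : (3 : Fin 4) ∈ I
  · have hI : I = (Set.univ : Set (Fin 4)) := by ext i; fin_cases i <;> simp [h0,h1,h2,h3]
    rw [hI, Set.compl_univ] at hxIc; simp at hxIc
  · have hI : I = ({0,1,2} : Set (Fin 4)) := by ext i; fin_cases i <;> simp [h0,h1,h2,h3]
    have hIc : Iᶜ = ({3} : Set (Fin 4)) := by rw [hI]; ext i; fin_cases i <;> simp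
    rw [hI] at hxI; rw [hIc] at hxIc
    simp only [Set.image_insert_eq, Set.image_singleton, hfv0, hfv1, hfv2, hfv3, convexHull_singleton, convexHull_pair, Set.mem_singleton_iff] at hxI hxIc
    subst hxIc
    refine absurd (hull_le' ?_ hxI) (not_le.2 hfq)
    rintro y (rfl | rfl | rfl) <;> assumption
  · have hI : I = ({0,1,3} : Set (Fin 4)) := by ext i; fin_cases i <;> simp [h0,h1,h2,h3]
    have hIc : Iᶜ = ({2} : Set (Fin 4)) := by rw [hI]; ext i; fin_cases i <;> simp
    rw [hI] at hxI; rw [hIc] at hxIc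
    simp only [Set.image_insert_eq, Set.image_singleton, hfv0, hfv1, hfv2, hfv3, convexHull_singleton, convexHull_pair, Set.mem_singleton_iff] at hxI hxIc
    subst hxIc
    exact absurd hxI hC
  · have hI : I = ({0,1} : Set (Fin 4)) := by ext i; fin_cases i <;> simp [h0,h1,h2,h3]
    have hIc : Iᶜ = ({2,3} : Set (Fin 4)) := by rw [hI]; ext i; fin_cases i <;> simp
    rw [hI] at hxI; rw [hIc] at hxIc
    simp only [Set.image_insert_eq, Set.image_singleton, hfv0, hfv1, hfv2, hfv3, convexHull_singleton, convexHull_pair, Set.mem_singleton_iff] at hxI hxIc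
    exact Or.inr (Or.inr ⟨x, hxIc, hxI⟩)
  · have hI : I = ({0,2,3} : Set (Fin 4)) := by ext i; fin_cases i <;> simp [h0,h1,h2,h3]
    have hIc : Iᶜ = ({1} : Set (Fin 4)) := by rw [hI]; ext i; fin_cases i <;> simp
    rw [hI] at hxI; rw [hIc] at hxIc
    simp only [Set.image_insert_eq, Set.image_singleton, hfv0, hfv1, hfv2, hfv3, convexHull_singleton, convexHull_pair, Set.mem_singleton_iff] at hxI hxIc
    subst hxIc
    exact absurd hxI hB
  · have hI : I = ({0,2} : Set (Fin 4)) := by ext i; fin_cases i <;> simp [h0,h1,h2,h3]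
    have hIc : Iᶜ = ({1,3} : Set (Fin 4)) := by rw [hI]; ext i; fin_cases i <;> simp
    rw [hI] at hxI; rw [hIc] at hxIc
    simp only [Set.image_insert_eq, Set.image_singleton, hfv0, hfv1, hfv2, hfv3, convexHull_singleton, convexHull_pair, Set.mem_singleton_iff] at hxI hxIc
    exact Or.inr (Or.inl ⟨x, hxIc, hxI⟩)
  · have hI : I = ({0,3} : Set (Fin 4)) := by ext i; fin_cases i <;> simp [h0,h1,h2,h3]
    have hIc : Iᶜ = ({1,2} : Set (Fin 4)) := by rw [hI]; ext i; fin_cases i <;> simp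
    rw [hI] at hxI; rw [hIc] at hxIc
    simp only [Set.image_insert_eq, Set.image_singleton, hfv0, hfv1, hfv2, hfv3, convexHull_singleton, convexHull_pair, Set.mem_singleton_iff] at hxI hxIc
    exact Or.inl ⟨x, hxI, hxIc⟩
  · have hI : I = ({0} : Set (Fin 4)) := by ext i; fin_cases i <;> simp [h0,h1,h2,h3]
    have hIc : Iᶜ = ({1,2,3} : Set (Fin 4)) := by rw [hI]; ext i; fin_cases i <;> simp
    rw [hI] at hxI; rw [hIc] at hxIc
    simp only [Set.image_insert_eq, Set.image_singleton, hfv0, hfv1, hfv2, hfv3, convexHull_singleton, convexHull_pair, Set.mem_singleton_iff] at hxI hxIc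
    subst hxI
    exact absurd hxIc hA
  · have hI : I = ({1,2,3} : Set (Fin 4)) := by ext i; fin_cases i <;> simp [h0,h1,h2,h3]
    have hIc : Iᶜ = ({0} : Set (Fin 4)) := by rw [hI]; ext i; fin_cases i <;> simp
    rw [hI] at hxI; rw [hIc] at hxIc
    simp only [Set.image_insert_eq, Set.image_singleton, hfv0, hfv1, hfv2, hfv3, convexHull_singleton, convexHull_pair, Set.mem_singleton_iff] at hxI hxIc
    subst hxIc
    exact absurd hxI hA
  · have hI : I = ({1,2} : Set (Fin 4)) := by ext i; fin_cases i <;> simp [h0,h1,h2,h3]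
    have hIc : Iᶜ = ({0,3} : Set (Fin 4)) := by rw [hI]; ext i; fin_cases i <;> simp
    rw [hI] at hxI; rw [hIc] at hxIc
    simp only [Set.image_insert_eq, Set.image_singleton, hfv0, hfv1, hfv2, hfv3, convexHull_singleton, convexHull_pair, Set.mem_singleton_iff] at hxI hxIc
    exact Or.inl ⟨x, hxIc, hxI⟩
  · have hI : I = ({1,3} : Set (Fin 4)) := by ext i; fin_cases i <;> simp [h0,h1,h2,h3]
    have hIc : Iᶜ = ({0,2} : Set (Fin 4)) := by rw [hI]; ext i; fin_cases i <;> simp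
    rw [hI] at hxI; rw [hIc] at hxIc
    simp only [Set.image_insert_eq, Set.image_singleton, hfv0, hfv1, hfv2, hfv3, convexHull_singleton, convexHull_pair, Set.mem_singleton_iff] at hxI hxIc
    exact Or.inr (Or.inl ⟨x, hxI, hxIc⟩)
  · have hI : I = ({1} : Set (Fin 4)) := by ext i; fin_cases i <;> simp [h0,h1,h2,h3]
    have hIc : Iᶜ = ({0,2,3} : Set (Fin 4)) := by rw [hI]; ext i; fin_cases i <;> simp
    rw [hI] at hxI; rw [hIc] at hxIc
    simp only [Set.image_insert_eq, Set.image_singleton, hfv0, hfv1, hfv2, hfv3, convexHull_singleton, convexHull_pair, Set.mem_singleton_iff] at hxI hxIc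
    subst hxI
    exact absurd hxIc hB
  · have hI : I = ({2,3} : Set (Fin 4)) := by ext i; fin_cases i <;> simp [h0,h1,h2,h3]
    have hIc : Iᶜ = ({0,1} : Set (Fin 4)) := by rw [hI]; ext i; fin_cases i <;> simp
    rw [hI] at hxI; rw [hIc] at hxIc
    simp only [Set.image_insert_eq, Set.image_singleton, hfv0, hfv1, hfv2, hfv3, convexHull_singleton, convexHull_pair, Set.mem_singleton_iff] at hxI hxIc
    exact Or.inr (Or.inr ⟨x, hxI, hxIc⟩)
  · have hI : I = ({2} : Set (Fin 4)) := by ext i; fin_cases i <;> simp [h0,h1,h2,h3]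
    have hIc : Iᶜ = ({0,1,3} : Set (Fin 4)) := by rw [hI]; ext i; fin_cases i <;> simp
    rw [hI] at hxI; rw [hIc] at hxIc
    simp only [Set.image_insert_eq, Set.image_singleton, hfv0, hfv1, hfv2, hfv3, convexHull_singleton, convexHull_pair, Set.mem_singleton_iff] at hxI hxIc
    subst hxI
    exact absurd hxIc hC
  · have hI : I = ({3} : Set (Fin 4)) := by ext i; fin_cases i <;> simp [h0,h1,h2,h3]
    have hIc : Iᶜ = ({0,1,2} : Set (Fin 4)) := by rw [hI]; ext i; fin_cases i <;> simp
    rw [hI] at hxI; rw [hIc] at hxIc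
    simp only [Set.image_insert_eq, Set.image_singleton, hfv0, hfv1, hfv2, hfv3, convexHull_singleton, convexHull_pair, Set.mem_singleton_iff] at hxI hxIc
    subst hxI
    refine absurd (hull_le' ?_ hxIc) (not_le.2 hfq)
    rintro y (rfl | rfl | rfl) <;> assumption
  · have hI : I = (∅ : Set (Fin 4)) := by ext i; fin_cases i <;> simp [h0,h1,h2,h3]
    rw [hI] at hxI; simp at hxI


private lemma lemC (a : ℝ × ℝ) (b : ℝ) (A B C q q' : ℝ × ℝ)
    (hfA : a.1 * A.1 + a.2 * A.2 ≤ b) (hfB : a.1 * B.1 + a.2 * B.2 ≤ b)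
    (hfC : a.1 * C.1 + a.2 * C.2 ≤ b)
    (hfq : b < a.1 * q.1 + a.2 * q.2) (hfq' : b < a.1 * q'.1 + a.2 * q'.2)
    (hA : A ∉ convexHull ℝ ({B, C, q, q'} : Set (ℝ × ℝ)))
    (hB : B ∉ convexHull ℝ ({A, C, q, q'} : Set (ℝ × ℝ)))
    (hC : C ∉ convexHull ℝ ({A, q, q'} : Set (ℝ × ℝ)))
    (hz : (segment ℝ A q ∩ segment ℝ B C).Nonempty)
    (hw : (segment ℝ B q' ∩ segment ℝ A C).Nonempty) : False := by
  obtain ⟨z, hz1, hz2⟩ := hz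
  obtain ⟨w, hw1, hw2⟩ := hw
  have hz1' := hz1; have hz2' := hz2; have hw1' := hw1; have hw2' := hw2
  obtain ⟨s, u, hs0, hu0, hsu, hzeq⟩ := hz1
  obtain ⟨α, α', hα0, hα'0, hαα, hzeq2⟩ := hz2
  obtain ⟨r, v, hr0, hv0, hrv, hweq⟩ := hw1
  obtain ⟨β, β', hβ0, hβ'0, hββ, hweq2⟩ := hw2
  have hs : s = 1 - u := by linarith
  have hα' : α' = 1 - α := by linarith
  have hr : r = 1 - v := by linarith
  have hβ' : β' = 1 - β := by linarith
  subst hs; subst hα'; subst hr; subst hβ'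
  have E1 : (1-u) • A + u • q = α • B + (1-α) • C := hzeq.trans hzeq2.symm
  have E2 : (1-v) • B + v • q' = β • A + (1-β) • C := hweq.trans hweq2.symm
  have E1x : (1-u) * A.1 + u * q.1 = α * B.1 + (1-α) * C.1 := by
    have := congrArg Prod.fst E1
    simpa [Prod.fst_add, Prod.smul_fst, smul_eq_mul] using this
  have E1y : (1-u) * A.2 + u * q.2 = α * B.2 + (1-α) * C.2 := by
    have := congrArg Prod.snd E1
    simpa [Prod.snd_add, Prod.smul_snd, smul_eq_mul] using this
  have E2x : (1-v) * B.1 + v * q'.1 = β * A.1 + (1-β) * C.1 := by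
    have := congrArg Prod.fst E2
    simpa [Prod.fst_add, Prod.smul_fst, smul_eq_mul] using this
  have E2y : (1-v) * B.2 + v * q'.2 = β * A.2 + (1-β) * C.2 := by
    have := congrArg Prod.snd E2
    simpa [Prod.snd_add, Prod.smul_snd, smul_eq_mul] using this
  have F1 : (1-u) * (a.1 * A.1 + a.2 * A.2) + u * (a.1 * q.1 + a.2 * q.2)
      = α * (a.1 * B.1 + a.2 * B.2) + (1-α) * (a.1 * C.1 + a.2 * C.2) := by
    linear_combination a.1 * E1x + a.2 * E1y
  have F2 : (1-v) * (a.1 * B.1 + a.2 * B.2) + v * (a.1 * q'.1 + a.2 * q'.2)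
      = β * (a.1 * A.1 + a.2 * A.2) + (1-β) * (a.1 * C.1 + a.2 * C.2) := by
    linear_combination a.1 * E2x + a.2 * E2y
  -- strictness facts
  have hu : 0 < u := by
    rcases hu0.lt_or_eq with h | h
    · exact h
    · exfalso
      rw [← h] at hzeq
      simp at hzeq
      apply hA
      have : A ∈ segment ℝ B C := by rw [hzeq]; exact hz2'
      rw [← convexHull_pair] at this
      exact convexHull_mono (by intro y hy; simp at hy ⊢; tauto) this
  have hv : 0 < v := by
    rcases hv0.lt_or_eq with h | h
    · exact h
    · exfalso
      rw [← h] at hweq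
      simp at hweq
      apply hB
      have : B ∈ segment ℝ A C := by rw [hweq]; exact hw2'
      rw [← convexHull_pair] at this
      exact convexHull_mono (by intro y hy; simp at hy ⊢; tauto) this
  have hα1 : α < 1 := by
    rcases lt_or_eq_of_le (by linarith : α ≤ 1) with h | h
    · exact h
    · exfalso
      rw [h] at hzeq2
      simp at hzeq2
      apply hB
      have hBz : B = z := by first | exact hzeq2 | exact hzeq2.symm
      have : B ∈ segment ℝ A q := by rw [hBz]; exact hz1'
      rw [← convexHull_pair] at this
      exact convexHull_mono (by intro y hy; simp at hy ⊢; tauto) this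
  have hv1 : v < 1 := by
    by_contra hcon
    have hveq : v = 1 := le_antisymm (by linarith) (by linarith)
    rw [hveq] at F2
    have e1 := mul_le_mul_of_nonneg_left hfA hβ0
    have e2 := mul_le_mul_of_nonneg_left hfC hβ'0
    have h3 : β * b + (1-β) * b = b := by ring
    linarith [F2]
  rcases le_or_gt (α*β) ((1-u)*(1-v)) with hcase | hcase
  · -- C ∈ convexHull {A, q, q'}
    have KX : ((1-u)*(1-v) - α*β) * A.1 + ((1-v)*u) * q.1 + (α*v) * q'.1
        = ((1-v)*(1-α) + α*(1-β)) * C.1 := by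
      linear_combination (1-v) * E1x + α * E2x
    have KY : ((1-u)*(1-v) - α*β) * A.2 + ((1-v)*u) * q.2 + (α*v) * q'.2
        = ((1-v)*(1-α) + α*(1-β)) * C.2 := by
      linear_combination (1-v) * E1y + α * E2y
    obtain ⟨c1, hc1⟩ : ∃ x : ℝ, x = (1-u)*(1-v) - α*β := ⟨_, rfl⟩
    obtain ⟨c4, hc4⟩ : ∃ x : ℝ, x = (1-v)*u := ⟨_, rfl⟩
    obtain ⟨c5, hc5⟩ : ∃ x : ℝ, x = α*v := ⟨_, rfl⟩
    obtain ⟨S, hSdef⟩ : ∃ x : ℝ, x = (1-v)*(1-α) + α*(1-β) := ⟨_, rfl⟩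
    rw [← hc1, ← hc4, ← hc5, ← hSdef] at KX KY
    have hc1n : 0 ≤ c1 := by rw [hc1]; linarith
    have hc4p : 0 < c4 := by rw [hc4]; exact mul_pos (by linarith) hu
    have hc5n : 0 ≤ c5 := by rw [hc5]; exact mul_nonneg hα0 hv.le
    have hSp : 0 < S := by
      have h1 : 0 < (1-v)*(1-α) := mul_pos (by linarith) (by linarith)
      have h2 : 0 ≤ α*(1-β) := mul_nonneg hα0 hβ'0
      rw [hSdef]; linarith
    have hsum : c1 + c4 + c5 = S := by rw [hc1, hc4, hc5, hSdef]; ring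
    have hwp : 0 < c4 + c5 := by linarith
    have K : c1 • A + (c4 • q + c5 • q') = S • C := by
      rw [Prod.ext_iff]
      constructor
      · simp only [Prod.fst_add, Prod.smul_fst, smul_eq_mul]
        linarith [KX]
      · simp only [Prod.snd_add, Prod.smul_snd, smul_eq_mul]
        linarith [KY]
    obtain ⟨m, hm⟩ : ∃ x : ℝ × ℝ, x = (c4/(c4+c5)) • q + (c5/(c4+c5)) • q' := ⟨_, rfl⟩
    have hmseg : m ∈ segment ℝ q q' :=
      ⟨c4/(c4+c5), c5/(c4+c5), by positivity, by positivity, by field_simp, hm.symm⟩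
    have hmhull : m ∈ convexHull ℝ ({A,q,q'} : Set (ℝ×ℝ)) := by
      have h := hmseg
      rw [← convexHull_pair] at h
      exact convexHull_mono (by intro y hy; simp at hy ⊢; tauto) h
    have hAhull : A ∈ convexHull ℝ ({A,q,q'} : Set (ℝ×ℝ)) := subset_convexHull ℝ _ (by simp)
    have hident : (c1/S) • A + ((c4+c5)/S) • m = C := by
      have h1 : (c1/S) • A + ((c4+c5)/S) • m = S⁻¹ • (c1 • A + (c4 • q + c5 • q')) := by
        rw [hm]
        match_scalars <;> field_simp <;> ring
      rw [h1, K, smul_smul, inv_mul_cancel₀ hSp.ne', one_smul]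
    have hCseg : C ∈ segment ℝ A m :=
      ⟨c1/S, (c4+c5)/S, by positivity, by positivity, by field_simp; linarith, hident⟩
    exact hC ((convex_convexHull ℝ _).segment_subset hAhull hmhull hCseg)
  · -- scalar contradiction
    have hprod : 0 ≤ (1-u)*(1-v) := mul_nonneg (by linarith) (by linarith)
    have hα : 0 < α := by nlinarith
    have hβ : 0 < β := by nlinarith
    have key : β*u*(a.1 * q.1 + a.2 * q.2) + (1-u)*v*(a.1 * q'.1 + a.2 * q'.2)
        = (α*β - (1-u)*(1-v))*(a.1 * B.1 + a.2 * B.2)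
          + (β*(1-α) + (1-u)*(1-β))*(a.1 * C.1 + a.2 * C.2) := by
      linear_combination β * F1 + (1-u) * F2
    have i1 : (β*u)*b < (β*u)*(a.1 * q.1 + a.2 * q.2) :=
      mul_lt_mul_of_pos_left hfq (mul_pos hβ hu)
    have i2 : ((1-u)*v)*b ≤ ((1-u)*v)*(a.1 * q'.1 + a.2 * q'.2) :=
      mul_le_mul_of_nonneg_left hfq'.le (mul_nonneg (by linarith) hv.le)
    have i3 : (α*β - (1-u)*(1-v))*(a.1 * B.1 + a.2 * B.2) ≤ (α*β - (1-u)*(1-v))*b :=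
      mul_le_mul_of_nonneg_left hfB (by linarith)
    have i4 : (β*(1-α) + (1-u)*(1-β))*(a.1 * C.1 + a.2 * C.2) ≤ (β*(1-α) + (1-u)*(1-β))*b :=
      mul_le_mul_of_nonneg_left hfC
        (by
          have h1 : 0 ≤ β*(1-α) := mul_nonneg hβ0 (by linarith)
          have h2 : 0 ≤ (1-u)*(1-β) := mul_nonneg (by linarith) hβ'0
          linarith)
    have idb : (β*u)*b + ((1-u)*v)*b = (α*β - (1-u)*(1-v))*b + (β*(1-α)+(1-u)*(1-β))*b := by
      ring
    linarith [key, i1, i2, i3, i4, idb]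


/-- The hitting-set lemma (Lemma 1): if `P` is a finite planar point set in general
position, `t ≥ 3`, `ℰ'` is the family of traces `P ∩ h` of half-planes `h` with
`|P ∩ h| = t`, `P'` is the set of extreme points of `P`, and `N ⊆ P'` is a
containment-minimal hitting set for `ℰ'`, then `|N ∩ E| ≤ 2` for every `E ∈ ℰ'`. -/
theorem minimal_hitting_set_meets_in_at_most_two (P : Finset (ℝ × ℝ)) (t : ℕ) (ht : 3 ≤ t)
    (hgp : ∀ p ∈ P, ∀ q ∈ P, ∀ r ∈ P, p ≠ q → q ≠ r → p ≠ r →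
      ¬ Collinear ℝ ({p, q, r} : Set (ℝ × ℝ)))
    (E' : Set (Finset (ℝ × ℝ)))
    (hE' : E' = {E | ∃ (a : ℝ × ℝ) (b : ℝ), a ≠ 0 ∧
        E = P.filter (fun p => a.1 * p.1 + a.2 * p.2 ≤ b) ∧ E.card = t})
    (P' : Finset (ℝ × ℝ))
    (hP' : P' = P.filter
      (fun p => p ∉ convexHull ℝ ((P.erase p : Finset (ℝ × ℝ)) : Set (ℝ × ℝ))))
    (N : Finset (ℝ × ℝ)) (hNsub : N ⊆ P')
    (hhit : ∀ E ∈ E', (N ∩ E).Nonempty)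
    (hmin : ∀ N'' : Finset (ℝ × ℝ), N'' ⊂ N → ∃ E ∈ E', N'' ∩ E = ∅) :
    ∀ E ∈ E', (N ∩ E).card ≤ 2 := by
  subst hE' hP'
  have hext : ∀ p ∈ N, p ∈ P ∧ p ∉ convexHull ℝ ((P.erase p : Finset (ℝ × ℝ)) : Set (ℝ × ℝ)) := by
    intro p hp
    have := hNsub hp
    rw [Finset.mem_filter] at this
    exact this
  have priv : ∀ p ∈ N, ∃ (c : ℝ × ℝ) (d : ℝ),
      (P.filter (fun x => c.1 * x.1 + c.2 * x.2 ≤ d)).card = t ∧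
      p ∈ P.filter (fun x => c.1 * x.1 + c.2 * x.2 ≤ d) ∧
      ∀ y ∈ N, y ≠ p → y ∉ P.filter (fun x => c.1 * x.1 + c.2 * x.2 ≤ d) := by
    intro p hp
    obtain ⟨E₀, hE₀mem, hE₀empty⟩ := hmin (N.erase p) (Finset.erase_ssubset hp)
    obtain ⟨y, hy⟩ := hhit _ hE₀mem
    obtain ⟨c, d, hc0, rfl, hcard⟩ := hE₀mem
    rw [Finset.mem_inter] at hy
    have hyp : y = p := by
      by_contra hne
      have : y ∈ N.erase p ∩ P.filter (fun x => c.1 * x.1 + c.2 * x.2 ≤ d) :=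
        Finset.mem_inter.2 ⟨Finset.mem_erase.2 ⟨hne, hy.1⟩, hy.2⟩
      rw [hE₀empty] at this
      exact absurd this (Finset.notMem_empty _)
    refine ⟨c, d, hcard, hyp ▸ hy.2, ?_⟩
    intro x hx hxp hmem
    have : x ∈ N.erase p ∩ P.filter (fun x => c.1 * x.1 + c.2 * x.2 ≤ d) :=
      Finset.mem_inter.2 ⟨Finset.mem_erase.2 ⟨hxp, hx⟩, hmem⟩
    rw [hE₀empty] at this
    exact absurd this (Finset.notMem_empty _)
  intro E hE
  by_contra hcard
  push_neg at hcard
  obtain ⟨T, hTsub, hTcard⟩ := Finset.exists_subset_card_eq hcard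
  obtain ⟨p1, p2, p3, h12, h13, h23, hTeq⟩ := Finset.card_eq_three.1 hTcard
  obtain ⟨a, b, ha0, hEdef, hEcard⟩ := hE
  have hp1 : p1 ∈ N ∩ E := hTsub (by rw [hTeq]; simp)
  have hp2 : p2 ∈ N ∩ E := hTsub (by rw [hTeq]; simp)
  have hp3 : p3 ∈ N ∩ E := hTsub (by rw [hTeq]; simp)
  rw [Finset.mem_inter] at hp1 hp2 hp3
  have hp1N := hp1.1; have hp2N := hp2.1; have hp3N := hp3.1
  have hp1E := hp1.2; have hp2E := hp2.2; have hp3E := hp3.2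
  rw [hEdef, Finset.mem_filter] at hp1E hp2E hp3E
  have hf1 := hp1E.2; have hf2 := hp2E.2; have hf3 := hp3E.2
  have hP1 := hp1E.1; have hP2 := hp2E.1; have hP3 := hp3E.1
  obtain ⟨c1, d1, hcard1, hmem1, hpriv1⟩ := priv p1 hp1N
  obtain ⟨c2, d2, hcard2, hmem2, hpriv2⟩ := priv p2 hp2N
  obtain ⟨c3, d3, hcard3, hmem3, hpriv3⟩ := priv p3 hp3N
  have getq : ∀ (c : ℝ × ℝ) (d : ℝ),
      (P.filter (fun x => c.1 * x.1 + c.2 * x.2 ≤ d)).card = t →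
      (∃ j, j ∈ ({p1, p2, p3} : Finset (ℝ × ℝ)) ∧
        j ∉ P.filter (fun x => c.1 * x.1 + c.2 * x.2 ≤ d)) →
      ∃ qq, qq ∈ P ∧ b < a.1 * qq.1 + a.2 * qq.2 ∧ c.1 * qq.1 + c.2 * qq.2 ≤ d := by
    rintro c d hcardc ⟨j, hjmem, hjnot⟩
    by_contra hno
    push_neg at hno
    have hsub : P.filter (fun x => c.1 * x.1 + c.2 * x.2 ≤ d) ⊆ E := by
      intro x hx
      rw [Finset.mem_filter] at hx
      rw [hEdef, Finset.mem_filter]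
      refine ⟨hx.1, ?_⟩
      by_contra hxb
      push_neg at hxb
      exact absurd hx.2 (not_le.2 (hno x hx.1 hxb))
    have heq : P.filter (fun x => c.1 * x.1 + c.2 * x.2 ≤ d) = E :=
      Finset.eq_of_subset_of_card_le hsub (by rw [hEcard, hcardc])
    rw [heq] at hjnot
    apply hjnot
    have : j ∈ N ∩ E := hTsub (by rw [hTeq]; exact hjmem)
    exact (Finset.mem_inter.1 this).2
  obtain ⟨q1, hq1P, hfq1, hg1q1⟩ := getq c1 d1 hcard1
    ⟨p2, by simp, hpriv1 p2 hp2N (Ne.symm h12)⟩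
  obtain ⟨q2, hq2P, hfq2, hg2q2⟩ := getq c2 d2 hcard2
    ⟨p1, by simp, hpriv2 p1 hp1N h12⟩
  obtain ⟨q3, hq3P, hfq3, hg3q3⟩ := getq c3 d3 hcard3
    ⟨p1, by simp, hpriv3 p1 hp1N h13⟩
  -- g-values of the p's for each private halfplane
  have hg1p1 : c1.1 * p1.1 + c1.2 * p1.2 ≤ d1 := (Finset.mem_filter.1 hmem1).2
  have hg2p2 : c2.1 * p2.1 + c2.2 * p2.2 ≤ d2 := (Finset.mem_filter.1 hmem2).2
  have hg3p3 : c3.1 * p3.1 + c3.2 * p3.2 ≤ d3 := (Finset.mem_filter.1 hmem3).2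
  have hgt : ∀ (c : ℝ × ℝ) (d : ℝ) (y : ℝ × ℝ), y ∈ P →
      y ∉ P.filter (fun x => c.1 * x.1 + c.2 * x.2 ≤ d) → d < c.1 * y.1 + c.2 * y.2 := by
    intro c d y hyP hy
    rw [Finset.mem_filter] at hy
    push_neg at hy
    exact hy hyP
  have hg1p2 := hgt c1 d1 p2 hP2 (hpriv1 p2 hp2N (Ne.symm h12))
  have hg1p3 := hgt c1 d1 p3 hP3 (hpriv1 p3 hp3N (Ne.symm h13))
  have hg2p1 := hgt c2 d2 p1 hP1 (hpriv2 p1 hp1N h12)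
  have hg2p3 := hgt c2 d2 p3 hP3 (hpriv2 p3 hp3N (Ne.symm h23))
  have hg3p1 := hgt c3 d3 p1 hP1 (hpriv3 p1 hp1N h13)
  have hg3p2 := hgt c3 d3 p2 hP2 (hpriv3 p2 hp2N h23)
  -- no-crossing facts from the private halfplanes
  have nc1 : ¬ (segment ℝ p1 q1 ∩ segment ℝ p2 p3).Nonempty := by
    rintro ⟨x, hxa, hxb⟩
    have h1 := seg_le hg1p1 hg1q1 hxa
    have h2 := seg_lt hg1p2 hg1p3 hxb
    linarith
  have nc2 : ¬ (segment ℝ p2 q2 ∩ segment ℝ p1 p3).Nonempty := by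
    rintro ⟨x, hxa, hxb⟩
    have h1 := seg_le hg2p2 hg2q2 hxa
    have h2 := seg_lt hg2p1 hg2p3 hxb
    linarith
  have nc3 : ¬ (segment ℝ p3 q3 ∩ segment ℝ p1 p2).Nonempty := by
    rintro ⟨x, hxa, hxb⟩
    have h1 := seg_le hg3p3 hg3q3 hxa
    have h2 := seg_lt hg3p1 hg3p2 hxb
    linarith
  have hqne : ∀ (qq pp : ℝ × ℝ), b < a.1 * qq.1 + a.2 * qq.2 →
      a.1 * pp.1 + a.2 * pp.2 ≤ b → qq ≠ pp := by
    intro qq pp h1 h2 h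
    rw [h] at h1; linarith
  have hnc : ∀ pm ∈ N, ∀ S : Set (ℝ × ℝ), (∀ x ∈ S, x ∈ P ∧ x ≠ pm) →
      pm ∉ convexHull ℝ S := by
    intro pm hpm S hS hmem
    refine (hext pm hpm).2 (convexHull_mono ?_ hmem)
    intro x hx
    rcases hS x hx with ⟨hxP, hxne⟩
    simp only [Finset.coe_erase, Set.mem_diff, Finset.mem_coe, Set.mem_singleton_iff]
    exact ⟨hxP, hxne⟩
  have ssym : ∀ x y : ℝ × ℝ, segment ℝ x y = segment ℝ y x := fun x y => segment_symm ℝ x y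
  -- helper hull-avoidance facts for lemC applications
  have mk4 : ∀ (pm x y z w : ℝ × ℝ), pm ∈ N → x ∈ P → x ≠ pm → y ∈ P → y ≠ pm →
      z ∈ P → z ≠ pm → w ∈ P → w ≠ pm → pm ∉ convexHull ℝ ({x, y, z, w} : Set (ℝ × ℝ)) := by
    intro pm x y z w hpm hx hxn hy hyn hz hzn hw hwn
    refine hnc pm hpm _ ?_
    rintro o ho
    simp only [Set.mem_insert_iff, Set.mem_singleton_iff] at ho
    rcases ho with rfl|rfl|rfl|rfl
    exacts [⟨hx, hxn⟩, ⟨hy, hyn⟩, ⟨hz, hzn⟩, ⟨hw, hwn⟩]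
  have mk3 : ∀ (pm x y z : ℝ × ℝ), pm ∈ N → x ∈ P → x ≠ pm → y ∈ P → y ≠ pm →
      z ∈ P → z ≠ pm → pm ∉ convexHull ℝ ({x, y, z} : Set (ℝ × ℝ)) := by
    intro pm x y z hpm hx hxn hy hyn hz hzn
    refine hnc pm hpm _ ?_
    rintro o ho
    simp only [Set.mem_insert_iff, Set.mem_singleton_iff] at ho
    rcases ho with rfl|rfl|rfl
    exacts [⟨hx, hxn⟩, ⟨hy, hyn⟩, ⟨hz, hzn⟩]
  have R1 := radon4 a b p1 p2 p3 q1 hf1 hf2 hf3 hfq1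
    (mk3 p1 p2 p3 q1 hp1N hP2 (Ne.symm h12) hP3 (Ne.symm h13) hq1P (hqne q1 p1 hfq1 hf1))
    (mk3 p2 p1 p3 q1 hp2N hP1 h12 hP3 (Ne.symm h23) hq1P (hqne q1 p2 hfq1 hf2))
    (mk3 p3 p1 p2 q1 hp3N hP1 h13 hP2 h23 hq1P (hqne q1 p3 hfq1 hf3))
  have R2 := radon4 a b p1 p2 p3 q2 hf1 hf2 hf3 hfq2
    (mk3 p1 p2 p3 q2 hp1N hP2 (Ne.symm h12) hP3 (Ne.symm h13) hq2P (hqne q2 p1 hfq2 hf1))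
    (mk3 p2 p1 p3 q2 hp2N hP1 h12 hP3 (Ne.symm h23) hq2P (hqne q2 p2 hfq2 hf2))
    (mk3 p3 p1 p2 q2 hp3N hP1 h13 hP2 h23 hq2P (hqne q2 p3 hfq2 hf3))
  have R3 := radon4 a b p1 p2 p3 q3 hf1 hf2 hf3 hfq3
    (mk3 p1 p2 p3 q3 hp1N hP2 (Ne.symm h12) hP3 (Ne.symm h13) hq3P (hqne q3 p1 hfq3 hf1))
    (mk3 p2 p1 p3 q3 hp2N hP1 h12 hP3 (Ne.symm h23) hq3P (hqne q3 p2 hfq3 hf2))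
    (mk3 p3 p1 p2 q3 hp3N hP1 h13 hP2 h23 hq3P (hqne q3 p3 hfq3 hf3))
  rcases R1 with hcr | hcr1 | hcr1
  · exact nc1 hcr
  · -- cross(2, q1) : segment p2 q1 ∩ segment p1 p3
    rcases R2 with hcr2 | hcr2 | hcr2
    · -- cross(1, q2) : segment p1 q2 ∩ segment p2 p3
      exact lemC a b p2 p1 p3 q1 q2 hf2 hf1 hf3 hfq1 hfq2
        (mk4 p2 p1 p3 q1 q2 hp2N hP1 h12 hP3 (Ne.symm h23) hq1P (hqne q1 p2 hfq1 hf2)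
          hq2P (hqne q2 p2 hfq2 hf2))
        (mk4 p1 p2 p3 q1 q2 hp1N hP2 (Ne.symm h12) hP3 (Ne.symm h13) hq1P
          (hqne q1 p1 hfq1 hf1) hq2P (hqne q2 p1 hfq2 hf1))
        (mk3 p3 p2 q1 q2 hp3N hP2 h23 hq1P (hqne q1 p3 hfq1 hf3) hq2P (hqne q2 p3 hfq2 hf3))
        hcr1 hcr2
    · exact nc2 hcr2
    · -- cross(3, q2) : segment p3 q2 ∩ segment p1 p2
      rw [ssym p1 p3] at hcr1
      rw [ssym p1 p2] at hcr2
      exact lemC a b p2 p3 p1 q1 q2 hf2 hf3 hf1 hfq1 hfq2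
        (mk4 p2 p3 p1 q1 q2 hp2N hP3 (Ne.symm h23) hP1 h12 hq1P (hqne q1 p2 hfq1 hf2)
          hq2P (hqne q2 p2 hfq2 hf2))
        (mk4 p3 p2 p1 q1 q2 hp3N hP2 h23 hP1 h13 hq1P (hqne q1 p3 hfq1 hf3)
          hq2P (hqne q2 p3 hfq2 hf3))
        (mk3 p1 p2 q1 q2 hp1N hP2 (Ne.symm h12) hq1P (hqne q1 p1 hfq1 hf1)
          hq2P (hqne q2 p1 hfq2 hf1))
        hcr1 hcr2
  · -- cross(3, q1) : segment p3 q1 ∩ segment p1 p2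
    rcases R2 with hcr2 | hcr2 | hcr2
    · -- cross(1, q2)
      rw [ssym p2 p3] at hcr2
      exact lemC a b p3 p1 p2 q1 q2 hf3 hf1 hf2 hfq1 hfq2
        (mk4 p3 p1 p2 q1 q2 hp3N hP1 h13 hP2 h23 hq1P (hqne q1 p3 hfq1 hf3)
          hq2P (hqne q2 p3 hfq2 hf3))
        (mk4 p1 p3 p2 q1 q2 hp1N hP3 (Ne.symm h13) hP2 (Ne.symm h12) hq1P
          (hqne q1 p1 hfq1 hf1) hq2P (hqne q2 p1 hfq2 hf1))
        (mk3 p2 p3 q1 q2 hp2N hP3 (Ne.symm h23) hq1P (hqne q1 p2 hfq1 hf2)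
          hq2P (hqne q2 p2 hfq2 hf2))
        hcr1 hcr2
    · exact nc2 hcr2
    · -- cross(3, q2) : same middle twice, use q3
      rcases R3 with hcr3 | hcr3 | hcr3
      · -- cross(1, q3)
        rw [ssym p2 p3] at hcr3
        exact lemC a b p3 p1 p2 q1 q3 hf3 hf1 hf2 hfq1 hfq3
          (mk4 p3 p1 p2 q1 q3 hp3N hP1 h13 hP2 h23 hq1P (hqne q1 p3 hfq1 hf3)
            hq3P (hqne q3 p3 hfq3 hf3))
          (mk4 p1 p3 p2 q1 q3 hp1N hP3 (Ne.symm h13) hP2 (Ne.symm h12) hq1P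
            (hqne q1 p1 hfq1 hf1) hq3P (hqne q3 p1 hfq3 hf1))
          (mk3 p2 p3 q1 q3 hp2N hP3 (Ne.symm h23) hq1P (hqne q1 p2 hfq1 hf2)
            hq3P (hqne q3 p2 hfq3 hf2))
          hcr1 hcr3
      · -- cross(2, q3)
        rw [ssym p1 p2] at hcr1
        rw [ssym p1 p3] at hcr3
        exact lemC a b p3 p2 p1 q1 q3 hf3 hf2 hf1 hfq1 hfq3
          (mk4 p3 p2 p1 q1 q3 hp3N hP2 h23 hP1 h13 hq1P (hqne q1 p3 hfq1 hf3)
            hq3P (hqne q3 p3 hfq3 hf3))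
          (mk4 p2 p3 p1 q1 q3 hp2N hP3 (Ne.symm h23) hP1 h12 hq1P (hqne q1 p2 hfq1 hf2)
            hq3P (hqne q3 p2 hfq3 hf2))
          (mk3 p1 p3 q1 q3 hp1N hP3 (Ne.symm h13) hq1P (hqne q1 p1 hfq1 hf1)
            hq3P (hqne q3 p1 hfq3 hf1))
          hcr1 hcr3
      · exact nc3 hcr3
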